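/- arXiv:1910.13600 — 2 statements merged into one kernel-verified Lean document; each statement's English description precedes it below -/
import Mathlib

section
/- For every α > 0 there exists a constant c_α > 0 such that for all t > 0 and all ξ, η ∈ ℝ³, ∫₀ᵗ (1 + |ξ + ρη|²)^{α/2} dρ ≥ c_α · t · (1 + |ξ|² + t²|η|²)^{α/2}. -/
open MeasureTheory

/-- Key algebraic inequality for the Ukai lower bound. -/
lemma ukai_key_ineq (K b n t ρ₀ ρ : ℝ) (hK : 0 ≤ K) (hn : 0 ≤ n)
    (hb : b ^ 2 ≤ K * n) (ht : 0 < t) (hr0 : ρ₀ * n = -b)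
    (hρ1 : 0 ≤ ρ) (hρ2 : ρ ≤ t) (hgap : t / 4 ≤ |ρ - ρ₀|) :
    (1 + K + t ^ 2 * n) / 80 ≤ 1 + K + 2 * ρ * b + ρ ^ 2 * n := by
  have hbval : b = -(ρ₀ * n) := by linarith
  have h1 : ρ₀ ^ 2 * n ≤ K := by
    rcases eq_or_lt_of_le hn with h | h
    · rw [← h]; simpa using hK
    · have h2 : ρ₀ ^ 2 * n * n ≤ K * n := by
        have e : ρ₀ ^ 2 * n * n = b ^ 2 := by rw [hbval]; ring
        rw [e]; exact hb
      exact le_of_mul_le_mul_right h2 h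
  have hgap2 : t ^ 2 / 16 ≤ (ρ - ρ₀) ^ 2 := by
    have h := sq_abs (ρ - ρ₀)
    nlinarith [abs_nonneg (ρ - ρ₀)]
  have hident : 2 * ρ * b + ρ ^ 2 * n = n * (ρ - ρ₀) ^ 2 - ρ₀ ^ 2 * n := by
    rw [hbval]; ring
  by_cases hcase : |ρ₀| ≤ 2 * t
  · have h2 : ρ₀ ^ 2 ≤ 4 * t ^ 2 := by nlinarith [sq_abs ρ₀, abs_nonneg ρ₀]
    have h2n : ρ₀ ^ 2 * n ≤ 4 * t ^ 2 * n := by nlinarith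
    have hkey : n * t ^ 2 / 16 ≤ n * (ρ - ρ₀) ^ 2 := by nlinarith
    have hZ : 0 ≤ t ^ 2 * n := by positivity
    linarith
  · push_neg at hcase
    have h3 : ρ₀ ^ 2 / 4 ≤ (ρ - ρ₀) ^ 2 := by
      rcases abs_cases ρ₀ with ⟨h, _⟩ | ⟨h, _⟩ <;> nlinarith
    have h3n : n * ρ₀ ^ 2 / 4 ≤ n * (ρ - ρ₀) ^ 2 := by nlinarith
    have h4' : 4 * t ^ 2 ≤ ρ₀ ^ 2 := by
      nlinarith [mul_self_le_mul_self (by linarith : (0:ℝ) ≤ 2 * t) (le_of_lt hcase),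
        sq_abs ρ₀]
    have h4 : t ^ 2 * n ≤ ρ₀ ^ 2 * n / 4 := by nlinarith
    linarith

/-- Lower bound for an interval integral by a constant on a subinterval. -/
lemma ukai_integral_lower {f : ℝ → ℝ} (hf : Continuous f) (hf0 : ∀ ρ, 0 ≤ f ρ)
    {t a b C : ℝ} (h0a : 0 ≤ a) (hab : a ≤ b) (hbt : b ≤ t)
    (hC : ∀ ρ ∈ Set.Icc a b, C ≤ f ρ) :
    C * (b - a) ≤ ∫ ρ in (0 : ℝ)..t, f ρ := by
  have hi : ∀ u v : ℝ, IntervalIntegrable f volume u v := fun u v =>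
    hf.intervalIntegrable u v
  have e1 : (∫ ρ in (0 : ℝ)..a, f ρ) + ((∫ ρ in a..b, f ρ) + ∫ ρ in b..t, f ρ)
      = ∫ ρ in (0 : ℝ)..t, f ρ := by
    rw [intervalIntegral.integral_add_adjacent_intervals (hi a b) (hi b t)]
    exact intervalIntegral.integral_add_adjacent_intervals (hi 0 a) (hi a t)
  have p1 : 0 ≤ ∫ ρ in (0 : ℝ)..a, f ρ :=
    intervalIntegral.integral_nonneg h0a fun u _ => hf0 u
  have p3 : 0 ≤ ∫ ρ in b..t, f ρ :=
    intervalIntegral.integral_nonneg hbt fun u _ => hf0 u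
  have p2 : C * (b - a) ≤ ∫ ρ in a..b, f ρ := by
    have h := intervalIntegral.integral_mono_on hab
      (intervalIntegrable_const (c := C)) (hi a b) hC
    simpa [intervalIntegral.integral_const, smul_eq_mul, mul_comm] using h
  linarith

/-- Ukai inequality (lower bound). -/
theorem ukai_lower (α : ℝ) (hα : 0 < α) :
    ∃ c : ℝ, 0 < c ∧ ∀ (t : ℝ), 0 < t → ∀ ξ η : EuclideanSpace ℝ (Fin 3),
      c * t * (1 + ‖ξ‖ ^ 2 + t ^ 2 * ‖η‖ ^ 2) ^ (α / 2)
        ≤ ∫ ρ in (0 : ℝ)..t, (1 + ‖ξ + ρ • η‖ ^ 2) ^ (α / 2) := by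
  refine ⟨(1 / 4) * (1 / 80 : ℝ) ^ (α / 2), by positivity, ?_⟩
  intro t ht ξ η
  set b : ℝ := inner ℝ ξ η with hbdef
  have hCS : b ^ 2 ≤ ‖ξ‖ ^ 2 * ‖η‖ ^ 2 := by
    have h := real_inner_mul_inner_self_le ξ η
    rw [real_inner_self_eq_norm_sq, real_inner_self_eq_norm_sq] at h
    calc b ^ 2 = b * b := sq b
    _ ≤ _ := h
  have hexp : ∀ ρ : ℝ, ‖ξ + ρ • η‖ ^ 2 = ‖ξ‖ ^ 2 + 2 * ρ * b + ρ ^ 2 * ‖η‖ ^ 2 := by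
    intro ρ
    rw [@norm_add_sq_real, real_inner_smul_right, norm_smul, Real.norm_eq_abs,
      mul_pow, sq_abs]
    ring
  set ρ₀ : ℝ := if ‖η‖ ^ 2 = 0 then 0 else -b / ‖η‖ ^ 2 with hρ₀def
  have hr0 : ρ₀ * ‖η‖ ^ 2 = -b := by
    rw [hρ₀def]
    split_ifs with h
    · rw [h] at hCS ⊢
      have hb0 : b = 0 := by nlinarith [sq_nonneg b]
      simp [hb0]
    · rw [div_mul_cancel₀ _ h]
  set f : ℝ → ℝ := fun ρ => (1 + ‖ξ + ρ • η‖ ^ 2) ^ (α / 2) with hfdef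
  have hfc : Continuous f := by
    apply Continuous.rpow_const
    · continuity
    · intro x; right; positivity
  have hf0 : ∀ ρ, 0 ≤ f ρ := fun ρ => Real.rpow_nonneg (by positivity) _
  set M : ℝ := 1 + ‖ξ‖ ^ 2 + t ^ 2 * ‖η‖ ^ 2 with hMdef
  have hM0 : 0 < M := by positivity
  have hCval : ((1 / 80 : ℝ)) ^ (α / 2) * M ^ (α / 2) = (M / 80) ^ (α / 2) := by
    rw [← Real.mul_rpow (by norm_num) (le_of_lt hM0)]
    congr 1; ring
  have hpt : ∀ ρ : ℝ, 0 ≤ ρ → ρ ≤ t → t / 4 ≤ |ρ - ρ₀| →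
      (M / 80) ^ (α / 2) ≤ f ρ := by
    intro ρ h1 h2 h3
    apply Real.rpow_le_rpow (by positivity) _ (by positivity)
    rw [hexp ρ]
    have hki := ukai_key_ineq (‖ξ‖ ^ 2) b (‖η‖ ^ 2) t ρ₀ ρ (by positivity) (by positivity)
      hCS ht hr0 h1 h2 h3
    rw [hMdef]; linarith
  by_cases hc : ρ₀ ≤ t / 2
  · have key : (M / 80) ^ (α / 2) * (t - 3 * t / 4) ≤ ∫ ρ in (0 : ℝ)..t, f ρ := by
      apply ukai_integral_lower hfc hf0 (by linarith) (by linarith) le_rfl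
      intro ρ hρ
      apply hpt ρ (by linarith [hρ.1]) hρ.2
      have : t / 4 ≤ ρ - ρ₀ := by linarith [hρ.1]
      exact this.trans (le_abs_self _)
    calc (1 / 4) * (1 / 80 : ℝ) ^ (α / 2) * t * M ^ (α / 2)
        = (1 / 80 : ℝ) ^ (α / 2) * M ^ (α / 2) * (t - 3 * t / 4) := by ring
      _ = (M / 80) ^ (α / 2) * (t - 3 * t / 4) := by rw [hCval]
      _ ≤ _ := key
  · push_neg at hc
    have key : (M / 80) ^ (α / 2) * (t / 4 - 0) ≤ ∫ ρ in (0 : ℝ)..t, f ρ := by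
      apply ukai_integral_lower hfc hf0 le_rfl (by linarith) (by linarith)
      intro ρ hρ
      apply hpt ρ hρ.1 (by linarith [hρ.2])
      have : t / 4 ≤ ρ₀ - ρ := by linarith [hρ.2]
      calc t / 4 ≤ ρ₀ - ρ := this
        _ ≤ |ρ₀ - ρ| := le_abs_self _
        _ = |ρ - ρ₀| := abs_sub_comm _ _
    calc (1 / 4) * (1 / 80 : ℝ) ^ (α / 2) * t * M ^ (α / 2)
        = (1 / 80 : ℝ) ^ (α / 2) * M ^ (α / 2) * (t / 4 - 0) := by ring
      _ = (M / 80) ^ (α / 2) * (t / 4 - 0) := by rw [hCval]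
      _ ≤ _ := key
end

section
/- For every α > 0, ∫₀¹ ⟨ξ − τη⟩^α dτ ≥ (1 / (2^{2α+1}(α+1))) · (1 + |ξ|² + |η|²)^{α/2} for all ξ, η ∈ ℝ³, where ⟨ζ⟩ = (1 + |ζ|²)^{1/2}. -/
open MeasureTheory intervalIntegral

private lemma ukai_key (α : ℝ) (hα : 0 < α) (ξ η : EuclideanSpace ℝ (Fin 3)) :
    (max ‖ξ‖ ‖η‖) ^ α / (2 ^ α * (α + 1)) ≤ ∫ τ in (0:ℝ)..1, ‖ξ - τ • η‖ ^ α := by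
  have hα1 : (0:ℝ) < α + 1 := by linarith
  have h2α : (1:ℝ) ≤ 2 ^ α := Real.one_le_rpow (by norm_num) hα.le
  have hcont : Continuous fun τ : ℝ => ‖ξ - τ • η‖ ^ α :=
    ((continuous_const.sub (continuous_id.smul continuous_const)).norm).rpow_const
      (fun x => Or.inr hα.le)
  rcases le_total ‖η‖ ‖ξ‖ with hcase | hcase
  · -- case M = ‖ξ‖
    rw [max_eq_left hcase]
    have hlow : Continuous fun τ : ℝ => ‖ξ‖ ^ α * (1 - τ) ^ α :=
      continuous_const.mul
        (((continuous_const.sub continuous_id)).rpow_const (fun x => Or.inr hα.le))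
    have hmono : ∀ τ ∈ Set.Icc (0:ℝ) 1, ‖ξ‖ ^ α * (1 - τ) ^ α ≤ ‖ξ - τ • η‖ ^ α := by
      intro τ hτ
      have h1 : ‖ξ‖ * (1 - τ) ≤ ‖ξ - τ • η‖ := by
        have h := norm_sub_norm_le ξ (τ • η)
        rw [norm_smul, Real.norm_eq_abs, abs_of_nonneg hτ.1] at h
        nlinarith [hτ.1, hτ.2, norm_nonneg ξ, hcase]
      calc ‖ξ‖ ^ α * (1 - τ) ^ α = (‖ξ‖ * (1 - τ)) ^ α := by
            rw [Real.mul_rpow (norm_nonneg _) (by linarith [hτ.2])]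
        _ ≤ ‖ξ - τ • η‖ ^ α := Real.rpow_le_rpow (mul_nonneg (norm_nonneg _) (by linarith [hτ.2])) h1 hα.le
    have hint : (∫ τ in (0:ℝ)..1, ‖ξ‖ ^ α * (1 - τ) ^ α) = ‖ξ‖ ^ α / (α + 1) := by
      rw [intervalIntegral.integral_const_mul]
      have h := intervalIntegral.integral_comp_sub_left (a := (0:ℝ)) (b := 1)
        (fun x => x ^ α) 1
      simp only [sub_zero, sub_self] at h
      rw [h, integral_rpow (Or.inl (by linarith)), Real.zero_rpow (by linarith),
        Real.one_rpow, sub_zero]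
      ring
    have hmono' : (∫ τ in (0:ℝ)..1, ‖ξ‖ ^ α * (1 - τ) ^ α) ≤ ∫ τ in (0:ℝ)..1, ‖ξ - τ • η‖ ^ α :=
      intervalIntegral.integral_mono_on (by norm_num : (0:ℝ) ≤ 1)
        (hlow.intervalIntegrable _ _) (hcont.intervalIntegrable _ _) hmono
    rw [hint] at hmono'
    refine le_trans ?_ hmono'
    have hξα : (0:ℝ) ≤ ‖ξ‖ ^ α := Real.rpow_nonneg (norm_nonneg _) _
    rw [div_le_div_iff₀ (by positivity) hα1]
    nlinarith [mul_nonneg (mul_nonneg hξα hα1.le) (sub_nonneg.2 h2α)]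
  · -- case M = ‖η‖
    rw [max_eq_right hcase]
    rcases eq_or_lt_of_le (norm_nonneg η) with hη0 | hη0
    · rw [← hη0, Real.zero_rpow hα.ne', zero_div]
      apply intervalIntegral.integral_nonneg (by norm_num)
      intro τ _; positivity
    set a := ‖ξ‖ / ‖η‖ with hadef
    have ha0 : 0 ≤ a := by positivity
    have ha1 : a ≤ 1 := by
      rw [hadef, div_le_one hη0]; exact hcase
    have hlow : Continuous fun τ : ℝ => ‖η‖ ^ α * |τ - a| ^ α :=
      continuous_const.mul
        ((continuous_abs.comp (continuous_id.sub continuous_const)).rpow_const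
          (fun x => Or.inr hα.le))
    have hmono : ∀ τ ∈ Set.Icc (0:ℝ) 1, ‖η‖ ^ α * |τ - a| ^ α ≤ ‖ξ - τ • η‖ ^ α := by
      intro τ hτ
      have h1 : ‖η‖ * |τ - a| ≤ ‖ξ - τ • η‖ := by
        have h := abs_norm_sub_norm_le ξ (τ • η)
        rw [norm_smul, Real.norm_eq_abs, abs_of_nonneg hτ.1] at h
        have heq : ‖η‖ * |τ - a| = |‖ξ‖ - τ * ‖η‖| := by
          rw [← abs_of_pos hη0, ← abs_mul]
          rw [abs_sub_comm]
          congr 1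
          rw [hadef]
          field_simp
          rw [abs_of_pos hη0]; ring
        rw [heq]; exact h
      calc ‖η‖ ^ α * |τ - a| ^ α = (‖η‖ * |τ - a|) ^ α := by
            rw [Real.mul_rpow (norm_nonneg _) (abs_nonneg _)]
        _ ≤ ‖ξ - τ • η‖ ^ α := Real.rpow_le_rpow (mul_nonneg (norm_nonneg _) (abs_nonneg _)) h1 hα.le
    have habs : ∫ τ in (0:ℝ)..1, |τ - a| ^ α = (a ^ (α+1) + (1-a) ^ (α+1)) / (α+1) := by
      have hcont2 : Continuous fun τ : ℝ => |τ - a| ^ α :=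
        (continuous_abs.comp (continuous_id.sub continuous_const)).rpow_const
          (fun x => Or.inr hα.le)
      have hsplit : (∫ τ in (0:ℝ)..a, |τ - a| ^ α) + ∫ τ in a..1, |τ - a| ^ α
          = ∫ τ in (0:ℝ)..1, |τ - a| ^ α :=
        integral_add_adjacent_intervals (hcont2.intervalIntegrable _ _)
          (hcont2.intervalIntegrable _ _)
      have h1 : ∫ τ in (0:ℝ)..a, |τ - a| ^ α = a ^ (α+1) / (α+1) := by
        have heq : ∫ τ in (0:ℝ)..a, |τ - a| ^ α = ∫ τ in (0:ℝ)..a, (a - τ) ^ α := by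
          apply integral_congr
          intro x hx
          rw [Set.uIcc_of_le ha0] at hx
          simp only
          rw [abs_sub_comm, abs_of_nonneg (by linarith [hx.2])]
        rw [heq]
        have h := intervalIntegral.integral_comp_sub_left (a := (0:ℝ)) (b := a)
          (fun x => x ^ α) a
        simp only [sub_zero, sub_self] at h
        rw [h, integral_rpow (Or.inl (by linarith)), Real.zero_rpow (by linarith), sub_zero]
      have h2 : ∫ τ in a..(1:ℝ), |τ - a| ^ α = (1-a) ^ (α+1) / (α+1) := by
        have heq : ∫ τ in a..(1:ℝ), |τ - a| ^ α = ∫ τ in a..(1:ℝ), (τ - a) ^ α := by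
          apply integral_congr
          intro x hx
          rw [Set.uIcc_of_le ha1] at hx
          simp only
          rw [abs_of_nonneg (by linarith [hx.1])]
        rw [heq]
        have h := intervalIntegral.integral_comp_sub_right (a := a) (b := (1:ℝ))
          (fun x => x ^ α) a
        simp only [sub_self] at h
        rw [h, integral_rpow (Or.inl (by linarith)), Real.zero_rpow (by linarith), sub_zero]
      rw [← hsplit, h1, h2, ← add_div]
    have hconv : (2:ℝ) ^ (-α) ≤ a ^ (α+1) + (1-a) ^ (α+1) := by
      have hc := convexOn_rpow (p := α+1) (by linarith)
      have hcc := hc.2 (Set.mem_Ici.2 ha0) (Set.mem_Ici.2 (by linarith : (0:ℝ) ≤ 1 - a))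
        (by norm_num : (0:ℝ) ≤ 1/2) (by norm_num : (0:ℝ) ≤ 1/2) (by norm_num)
      simp only [smul_eq_mul] at hcc
      have heq : (1/2 : ℝ) * a + 1/2 * (1-a) = 1/2 := by ring
      rw [heq] at hcc
      have h12 : ((1:ℝ)/2) ^ (α+1) = 2 ^ (-(α+1)) := by
        rw [Real.rpow_neg (by norm_num), ← Real.inv_rpow (by norm_num)]
        norm_num
      have hcc2 : (2:ℝ) ^ (-(α+1)) ≤ 1/2 * a ^ (α+1) + 1/2 * (1-a) ^ (α+1) := h12 ▸ hcc
      have h2 : (2:ℝ) ^ (-α) = 2 * 2 ^ (-(α+1)) := by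
        rw [← Real.rpow_one_add' (by norm_num) (by intro h; linarith)]
        ring_nf
      rw [h2]; linarith
    have hmono' : (∫ τ in (0:ℝ)..1, ‖η‖ ^ α * |τ - a| ^ α) ≤ ∫ τ in (0:ℝ)..1, ‖ξ - τ • η‖ ^ α :=
      intervalIntegral.integral_mono_on (by norm_num : (0:ℝ) ≤ 1)
        (hlow.intervalIntegrable _ _) (hcont.intervalIntegrable _ _) hmono
    rw [intervalIntegral.integral_const_mul, habs] at hmono'
    refine le_trans ?_ hmono'
    have hηα : (0:ℝ) ≤ ‖η‖ ^ α := Real.rpow_nonneg (norm_nonneg _) _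
    have hneg : (2:ℝ) ^ (-α) = (2 ^ α)⁻¹ := by
      rw [Real.rpow_neg (by norm_num)]
    calc ‖η‖ ^ α / (2 ^ α * (α + 1))
        = ‖η‖ ^ α * ((2:ℝ) ^ (-α) / (α + 1)) := by
          rw [hneg]
          have h2ne : (2:ℝ) ^ α ≠ 0 := by positivity
          field_simp
      _ ≤ ‖η‖ ^ α * ((a ^ (α+1) + (1-a) ^ (α+1)) / (α + 1)) := by
          apply mul_le_mul_of_nonneg_left _ hηα
          gcongr

private lemma ukai_pointwise (α x : ℝ) (hα : 0 < α) (hx : 0 ≤ x) :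
    (1 + x ^ α) / 2 ≤ (1 + x ^ 2) ^ (α/2) := by
  have h1 : (1:ℝ) ≤ (1 + x ^ 2) ^ (α/2) :=
    Real.one_le_rpow (by nlinarith) (by positivity)
  have h2 : x ^ α ≤ (1 + x ^ 2) ^ (α/2) := by
    have hxx : x ^ α = (x ^ 2) ^ (α/2) := by
      rw [← Real.rpow_natCast x 2, ← Real.rpow_mul hx]
      congr 1; push_cast; ring
    rw [hxx]
    exact Real.rpow_le_rpow (by positivity) (by linarith) (by positivity)
  linarith

private lemma ukai_X (α : ℝ) (hα : 0 < α) (x y : ℝ) (hx : 0 ≤ x) (hy : 0 ≤ y) :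
    (1 + x ^ 2 + y ^ 2) ^ (α/2) ≤ 2 ^ α * (1 + (max x y) ^ α) := by
  set M := max x y with hMdef
  have hM0 : 0 ≤ M := le_trans hx (le_max_left _ _)
  set N := max 1 M with hNdef
  have hN1 : 1 ≤ N := le_max_left _ _
  have hN0 : 0 < N := by linarith
  have hbase : 1 + x ^ 2 + y ^ 2 ≤ 3 * N ^ 2 := by
    have h1 : x ≤ N := le_trans (le_max_left x y) (le_max_right _ _)
    have h2 : y ≤ N := le_trans (le_max_right x y) (le_max_right _ _)
    nlinarith
  calc (1 + x ^ 2 + y ^ 2) ^ (α/2)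
      ≤ (3 * N ^ 2) ^ (α/2) := Real.rpow_le_rpow (by positivity) hbase (by positivity)
    _ = 3 ^ (α/2) * N ^ α := by
        rw [Real.mul_rpow (by norm_num) (by positivity), ← Real.rpow_natCast N 2,
          ← Real.rpow_mul hN0.le]
        norm_num
        left
        congr 1; push_cast; ring
    _ ≤ 2 ^ α * (1 + M ^ α) := by
        have h3 : (3:ℝ) ^ (α/2) ≤ 2 ^ α := by
          have h5 : (3:ℝ) ^ (α/2) = (Real.sqrt 3) ^ α := by
            rw [Real.sqrt_eq_rpow, ← Real.rpow_mul (by norm_num)]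
            ring_nf
          rw [h5]
          apply Real.rpow_le_rpow (Real.sqrt_nonneg _) _ hα.le
          rw [show (2:ℝ) = Real.sqrt 4 by
            rw [show (4:ℝ) = 2^2 by norm_num, Real.sqrt_sq]; norm_num]
          exact Real.sqrt_le_sqrt (by norm_num)
        have h4 : N ^ α ≤ 1 + M ^ α := by
          rcases le_total M 1 with h | h
          · rw [hNdef, max_eq_left h, Real.one_rpow]
            have : (0:ℝ) ≤ M ^ α := Real.rpow_nonneg hM0 _
            linarith
          · rw [hNdef, max_eq_right h]
            norm_num
        exact mul_le_mul h3 h4 (by positivity) (by positivity)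

private lemma ukai_arith (P m β : ℝ) (hP : 1 ≤ P) (hm : 0 ≤ m) (hβ : 1 ≤ β) :
    (2*(P*P)*β)⁻¹ * (P*(1+m)) ≤ (1 + m/(P*β))/2 := by
  have hP0 : 0 < P := by linarith
  have hβ0 : 0 < β := by linarith
  rw [inv_mul_le_iff₀ (by positivity)]
  have hd : m / (P*β) * (P*β) = m := div_mul_cancel₀ m (by positivity)
  have h1 : (1:ℝ) ≤ P * β := one_le_mul_of_one_le_of_one_le hP hβ
  nlinarith [hd, h1, hP0, div_nonneg hm (by positivity : (0:ℝ) ≤ P*β)]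

/-- Scaled Ukai inequality with explicit constant. -/
theorem ukai_scaled (α : ℝ) (hα : 0 < α) (ξ η : EuclideanSpace ℝ (Fin 3)) :
    (2 ^ (2 * α + 1) * (α + 1))⁻¹ * (1 + ‖ξ‖ ^ 2 + ‖η‖ ^ 2) ^ (α / 2)
      ≤ ∫ τ in (0 : ℝ)..1, (1 + ‖ξ - τ • η‖ ^ 2) ^ (α / 2) := by
  set M := max ‖ξ‖ ‖η‖ with hMdef
  have hM0 : 0 ≤ M := le_trans (norm_nonneg ξ) (le_max_left _ _)
  have hα1 : (0:ℝ) < α + 1 := by linarith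
  have h2α : (1:ℝ) ≤ 2 ^ α := Real.one_le_rpow (by norm_num) hα.le
  have hconth : Continuous fun τ : ℝ => ‖ξ - τ • η‖ ^ α :=
    ((continuous_const.sub (continuous_id.smul continuous_const)).norm).rpow_const
      (fun x => Or.inr hα.le)
  have hcontg : Continuous fun τ : ℝ => (1 + ‖ξ - τ • η‖ ^ 2) ^ (α/2) := by
    apply Continuous.rpow_const
    · exact continuous_const.add
        (((continuous_const.sub (continuous_id.smul continuous_const)).norm).pow 2)
    · intro x
      right; positivity
  have hlowcont : Continuous fun τ : ℝ => (1 + ‖ξ - τ • η‖ ^ α) / 2 :=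
    (continuous_const.add hconth).div_const 2
  -- step 2 : integral comparison
  have step2 : (1 + ∫ τ in (0:ℝ)..1, ‖ξ - τ • η‖ ^ α) / 2
      ≤ ∫ τ in (0:ℝ)..1, (1 + ‖ξ - τ • η‖ ^ 2) ^ (α/2) := by
    have hm : (∫ τ in (0:ℝ)..1, (1 + ‖ξ - τ • η‖ ^ α) / 2)
        ≤ ∫ τ in (0:ℝ)..1, (1 + ‖ξ - τ • η‖ ^ 2) ^ (α/2) :=
      intervalIntegral.integral_mono_on (by norm_num : (0:ℝ) ≤ 1)
        (hlowcont.intervalIntegrable _ _) (hcontg.intervalIntegrable _ _)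
        (fun τ _ => ukai_pointwise α _ hα (norm_nonneg _))
    have hval : (∫ τ in (0:ℝ)..1, (1 + ‖ξ - τ • η‖ ^ α) / 2)
        = (1 + ∫ τ in (0:ℝ)..1, ‖ξ - τ • η‖ ^ α) / 2 := by
      rw [intervalIntegral.integral_div,
        intervalIntegral.integral_add intervalIntegrable_const
          (hconth.intervalIntegrable _ _)]
      simp
    rw [hval] at hm
    exact hm
  have hkey := ukai_key α hα ξ η
  have hX := ukai_X α hα ‖ξ‖ ‖η‖ (norm_nonneg _) (norm_nonneg _)
  have hC : (2:ℝ) ^ (2*α+1) = 2 * (2 ^ α * 2 ^ α) := by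
    rw [Real.rpow_add two_pos, Real.rpow_one, two_mul, Real.rpow_add two_pos]
    ring
  have hmα : (0:ℝ) ≤ M ^ α := Real.rpow_nonneg hM0 _
  calc (2 ^ (2 * α + 1) * (α + 1))⁻¹ * (1 + ‖ξ‖ ^ 2 + ‖η‖ ^ 2) ^ (α / 2)
      ≤ (2 ^ (2 * α + 1) * (α + 1))⁻¹ * (2 ^ α * (1 + M ^ α)) := by
        apply mul_le_mul_of_nonneg_left hX
        positivity
    _ = (2 * (2 ^ α * 2 ^ α) * (α + 1))⁻¹ * (2 ^ α * (1 + M ^ α)) := by rw [hC]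
    _ ≤ (1 + M ^ α / (2 ^ α * (α + 1))) / 2 :=
        ukai_arith (2 ^ α) (M ^ α) (α + 1) h2α hmα (by linarith)
    _ ≤ (1 + ∫ τ in (0:ℝ)..1, ‖ξ - τ • η‖ ^ α) / 2 := by
        have : M ^ α / (2 ^ α * (α + 1)) ≤ ∫ τ in (0:ℝ)..1, ‖ξ - τ • η‖ ^ α := hkey
        linarith
    _ ≤ _ := step2
end
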